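/- Let G be a finite directed acyclic graph in which every edge (a,b) satisfies |rel(a)| < |rel(b)| (i.e., the number of relatives strictly increases along every edge). Then every vertex y with at least one parent is the center of at least one unshielded collider: there exist distinct parents x, z of y that are not adjacent to each other. -/

import Mathlib

open Relation

def ancSet {V : Type*} (E : V → V → Prop) (v : V) : Set V :=
  {x | ReflTransGen E x v}

def descSet {V : Type*} (E : V → V → Prop) (v : V) : Set V :=
  {z | ReflTransGen E v z}

def relSet {V : Type*} (E : V → V → Prop) (v : V) : Set V :=
  ⋃ x ∈ ancSet E v, descSet E x

def Adj {V : Type*} (E : V → V → Prop) (a b : V) : Prop := E a b ∨ E b a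

def IsAcyclicRel {V : Type*} (E : V → V → Prop) : Prop :=
  ∀ v, ¬ TransGen E v v

/-- If the number of relatives strictly increases along every edge, every
vertex with at least one parent is the center of an unshielded collider. -/
theorem nonroot_is_collider_center {V : Type*} [Fintype V] (E : V → V → Prop)
    (hacyc : IsAcyclicRel E)
    (hrel : ∀ a b, E a b → (relSet E a).ncard < (relSet E b).ncard)
    (y : V) (hy : ∃ x, E x y) :
    ∃ x z, x ≠ z ∧ E x y ∧ E z y ∧ ¬ Adj E x z := by
  classical
  by_contra h
  push_neg at h
  obtain ⟨x, hx, hmax⟩ := Set.Finite.exists_maximalFor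
    (fun v => (relSet E v).ncard) {v | E v y} (Set.toFinite _) hy
  simp only [Set.mem_setOf_eq] at hx hmax
  have hsub : relSet E y ⊆ relSet E x := by
    intro u hu
    simp only [relSet, Set.mem_iUnion] at hu ⊢
    obtain ⟨w, hw, hu⟩ := hu
    rcases ReflTransGen.cases_tail hw with rfl | ⟨z, hwz, hzy⟩
    · exact ⟨x, ReflTransGen.refl, (ReflTransGen.single hx).trans hu⟩
    · by_cases hzx : z = x
      · subst hzx; exact ⟨w, hwz, hu⟩
      · rcases h x z (Ne.symm hzx) hx hzy with hxz | hzx'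
        · have h1 := hrel x z hxz
          have h2 := hmax hzy h1.le
          omega
        · exact ⟨w, hwz.trans (ReflTransGen.single hzx'), hu⟩
  have h1 := hrel x y hx
  have h2 := Set.ncard_le_ncard hsub (Set.toFinite _)
  omega
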